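/- The operator E = d/dx + x maps the Schwartz space S(ℝ) onto S(ℝ) and its kernel is the one-dimensional space spanned by e^{-x²/2}. -/

import Mathlib

open Complex SchwartzMap MeasureTheory intervalIntegral
open scoped ContDiff

noncomputable section AnnAux

namespace AnnAux

lemma contDiff_inner : ContDiff ℝ ∞ (fun x : ℝ => ((x:ℂ)^2/2)) :=
  (Complex.ofRealCLM.contDiff.pow 2).div_const 2

lemma contDiff_expSq : ContDiff ℝ ∞ (fun x : ℝ => Complex.exp ((x:ℂ)^2/2)) :=
  ((Complex.contDiff_exp (𝕜 := ℂ)).restrict_scalars ℝ).comp contDiff_inner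

lemma contDiff_expNegSq : ContDiff ℝ ∞ (fun x : ℝ => Complex.exp (-(x:ℂ)^2/2)) := by
  have := ((Complex.contDiff_exp (𝕜 := ℂ)).restrict_scalars ℝ).comp contDiff_inner.neg
  simpa [neg_div, Function.comp_def] using this

lemma hasDerivAt_expSqC (z : ℂ) :
    HasDerivAt (fun z : ℂ => Complex.exp (z^2/2)) (z * Complex.exp (z^2/2)) z := by
  have h2 := (hasDerivAt_pow 2 z).div_const 2
  have h := (Complex.hasDerivAt_exp (z^2/2)).comp z h2
  exact h.congr_deriv (by rw [show (2:ℕ)-1 = 1 from rfl]; push_cast; ring)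

lemma hasDerivAt_expSq (x : ℝ) :
    HasDerivAt (fun x : ℝ => Complex.exp ((x:ℂ)^2/2)) ((x:ℂ) * Complex.exp ((x:ℂ)^2/2)) x :=
  (hasDerivAt_expSqC (x:ℂ)).comp_ofReal

lemma hasDerivAt_expNegSqC (z : ℂ) :
    HasDerivAt (fun z : ℂ => Complex.exp (-z^2/2)) (-z * Complex.exp (-z^2/2)) z := by
  have h2 := ((hasDerivAt_pow 2 z).neg).div_const 2
  have h := (Complex.hasDerivAt_exp (-z^2/2)).comp z h2
  exact h.congr_deriv (by rw [show (2:ℕ)-1 = 1 from rfl]; push_cast; ring)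

lemma hasDerivAt_expNegSq (x : ℝ) :
    HasDerivAt (fun x : ℝ => Complex.exp (-(x:ℂ)^2/2)) (-(x:ℂ) * Complex.exp (-(x:ℂ)^2/2)) x :=
  (hasDerivAt_expNegSqC (x:ℂ)).comp_ofReal

variable (g : SchwartzMap ℝ ℂ)

/-- integrand -/
def u (g : SchwartzMap ℝ ℂ) : ℝ → ℂ := fun t => Complex.exp ((t:ℂ)^2/2) * g t

lemma continuous_u : Continuous (u g) :=
  (contDiff_expSq.continuous).mul g.continuous

/-- candidate preimage -/
def F (g : SchwartzMap ℝ ℂ) : ℝ → ℂ :=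
  fun x => Complex.exp (-(x:ℂ)^2/2) * ∫ t in (0:ℝ)..x, u g t

lemma exp_mul_exp_neg (x : ℝ) :
    Complex.exp (-(x:ℂ)^2/2) * Complex.exp ((x:ℂ)^2/2) = 1 := by
  rw [← Complex.exp_add]; ring_nf; exact Complex.exp_zero

lemma hasDerivAt_F (x : ℝ) :
    HasDerivAt (F g) (-(x:ℂ) * F g x + g x) x := by
  have hI : HasDerivAt (fun y : ℝ => ∫ t in (0:ℝ)..y, u g t) (u g x) x := by
    refine intervalIntegral.integral_hasDerivAt_right
      ((continuous_u g).intervalIntegrable _ _) ?_ (continuous_u g).continuousAt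
    exact (continuous_u g).aestronglyMeasurable.stronglyMeasurableAtFilter
  have h : HasDerivAt (fun y : ℝ => Complex.exp (-(y:ℂ)^2/2) * ∫ t in (0:ℝ)..y, u g t) _ x :=
    (hasDerivAt_expNegSq x).mul hI
  convert h using 1
  show -(x:ℂ) * F g x + g x = _
  rw [F]
  have : Complex.exp (-(x:ℂ)^2/2) * u g x = g x := by
    rw [u]; rw [← mul_assoc, exp_mul_exp_neg, one_mul]
  rw [← this]; ring
  rfl

lemma deriv_F : deriv (F g) = fun x : ℝ => -(x:ℂ) * F g x + g x :=
  funext fun x => (hasDerivAt_F g x).deriv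

lemma contDiff_F : ∀ n : ℕ, ContDiff ℝ n (F g)
  | 0 => contDiff_zero.2 (continuous_iff_continuousAt.2
      fun x => ((hasDerivAt_F g x).differentiableAt).continuousAt)
  | (n+1) => by
    rw [show ((n+1:ℕ) : WithTop ℕ∞) = (n:ℕ) + 1 by norm_cast, contDiff_succ_iff_deriv]
    refine ⟨fun x => (hasDerivAt_F g x).differentiableAt, by simp, ?_⟩
    rw [deriv_F]
    exact ((Complex.ofRealCLM.contDiff.neg).mul (contDiff_F n)).add
      (g.smooth'.of_le (by exact_mod_cast le_top))

lemma contDiff_infty_F : ContDiff ℝ ∞ (F g) :=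
  contDiff_infty.2 (contDiff_F g)

lemma hasDerivAt_iteratedDeriv_F (n : ℕ) (x : ℝ) :
    HasDerivAt (iteratedDeriv n (F g)) (iteratedDeriv (n+1) (F g) x) x := by
  have hd := ((contDiff_infty_F g).differentiable_iteratedDeriv n
    (by exact_mod_cast ENat.coe_lt_top n)).differentiableAt (x := x)
  rw [iteratedDeriv_succ]
  exact hd.hasDerivAt

lemma hasDerivAt_iteratedDeriv_g (n : ℕ) (x : ℝ) :
    HasDerivAt (iteratedDeriv n (⇑g)) (iteratedDeriv (n+1) (⇑g) x) x := by
  have hd := (g.smooth'.differentiable_iteratedDeriv n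
    (by exact_mod_cast ENat.coe_lt_top n)).differentiableAt (x := x)
  rw [iteratedDeriv_succ]
  exact hd.hasDerivAt

lemma iteratedDeriv_F_succ : ∀ n : ℕ, ∀ x : ℝ,
    iteratedDeriv (n+1) (F g) x = -(x:ℂ) * iteratedDeriv n (F g) x
      - n * iteratedDeriv (n-1) (F g) x + iteratedDeriv n (⇑g) x
  | 0, x => by
    simp only [iteratedDeriv_succ, iteratedDeriv_zero, deriv_F, Nat.cast_zero, zero_mul, sub_zero]
  | (n+1), x => by
    have hfun : iteratedDeriv (n+1) (F g) = fun y : ℝ => -(y:ℂ) * iteratedDeriv n (F g) y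
        - n * iteratedDeriv (n-1) (F g) y + iteratedDeriv n (⇑g) y :=
      funext (iteratedDeriv_F_succ n)
    have h1 : HasDerivAt (fun y : ℝ => -(y:ℂ) * iteratedDeriv n (F g) y)
        (-(1:ℂ) * iteratedDeriv n (F g) x + -(x:ℂ) * iteratedDeriv (n+1) (F g) x) x := by
      have hc : HasDerivAt (fun y : ℝ => -(y:ℂ)) (-1 : ℂ) x := by
        exact (hasDerivAt_id x).ofReal_comp.neg.congr_deriv (by simp)
      exact hc.mul (hasDerivAt_iteratedDeriv_F g n x)
    have h2 : HasDerivAt (fun y : ℝ => (n:ℂ) * iteratedDeriv (n-1) (F g) y)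
        ((n:ℂ) * iteratedDeriv (n-1+1) (F g) x) x :=
      (hasDerivAt_iteratedDeriv_F g (n-1) x).const_mul _
    have h3 := ((h1.sub h2).add (hasDerivAt_iteratedDeriv_g g n x))
    have h5 : deriv (iteratedDeriv (n+1) (F g)) x
        = -1 * iteratedDeriv n (F g) x + -(x:ℂ) * iteratedDeriv (n+1) (F g) x
          - (n:ℂ) * iteratedDeriv (n-1+1) (F g) x + iteratedDeriv (n+1) (⇑g) x := by
      conv_lhs => rw [hfun]
      exact h3.deriv
    rw [iteratedDeriv_succ, h5]
    rcases Nat.eq_zero_or_pos n with hn | hn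
    · subst hn; push_cast; ring
    · rw [Nat.sub_add_cancel hn, Nat.add_sub_cancel]
      push_cast; ring

/-- global bound for `x^k e^{-x^2/2}` -/
lemma pow_mul_exp_neg_le (k : ℕ) (x : ℝ) :
    |x|^k * Real.exp (-x^2/2) ≤ 1 + 2^k * (Nat.factorial k) := by
  have h1 : |x|^k ≤ 1 + |x|^(2*k) := by
    rcases le_total |x| 1 with h | h
    · have := pow_le_one₀ (abs_nonneg x) h (n := k)
      nlinarith [pow_nonneg (abs_nonneg x) (2*k)]
    · have : |x|^k ≤ |x|^(2*k) := pow_le_pow_right₀ h (by omega)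
      linarith
  have h2 : |x|^(2*k) ≤ 2^k * (Nat.factorial k) * Real.exp (x^2/2) := by
    have h3 := Real.pow_div_factorial_le_exp (x := x^2/2) (by positivity) k
    have h4 : (x^2/2)^k = x^(2*k) / 2^k := by
      rw [div_pow, pow_mul]
    rw [h4] at h3
    have h5 : |x|^(2*k) = x^(2*k) := by
      rw [pow_mul, _root_.sq_abs, ← pow_mul]
    rw [h5]
    have hf : (0:ℝ) < Nat.factorial k := by exact_mod_cast Nat.factorial_pos k
    rw [div_div, div_le_iff₀ (by positivity)] at h3
    calc x^(2*k) ≤ Real.exp (x^2/2) * (2^k * Nat.factorial k) := h3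
      _ = 2^k * (Nat.factorial k) * Real.exp (x^2/2) := by ring
  have hexp : Real.exp (-x^2/2) ≤ 1 :=
    Real.exp_le_one_iff.2 (by nlinarith [sq_nonneg x])
  have hpos : (0:ℝ) < Real.exp (-x^2/2) := Real.exp_pos _
  have hmul : Real.exp (x^2/2) * Real.exp (-x^2/2) = 1 := by
    rw [← Real.exp_add]; ring_nf; exact Real.exp_zero
  calc |x|^k * Real.exp (-x^2/2) ≤ (1 + 2^k * (Nat.factorial k) * Real.exp (x^2/2)) * Real.exp (-x^2/2) := by
        apply mul_le_mul_of_nonneg_right _ hpos.le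
        linarith
    _ = Real.exp (-x^2/2) + 2^k * (Nat.factorial k) * (Real.exp (x^2/2) * Real.exp (-x^2/2)) := by ring
    _ ≤ 1 + 2^k * (Nat.factorial k) := by rw [hmul]; simp [hexp]

/-- The core analytic estimate on the half line. -/
lemma core (k : ℕ) (M : ℝ) (hM : 0 ≤ M) (v : ℝ → ℂ) (hv : Continuous v)
    (hb : ∀ t : ℝ, 0 ≤ t → ‖v t‖ ≤ Real.exp (t^2/2) * M / (1+t)^(k+1))
    (x : ℝ) (hx : 0 ≤ x) :
    x^k * Real.exp (-x^2/2) * ‖∫ t in (0:ℝ)..x, v t‖ ≤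
      M * (((k:ℝ)+1) * Real.exp (((k:ℝ)+1)^2/2)) * (1 + 2^k * (Nat.factorial k)) + M := by
  set a : ℝ := (k:ℝ)+1 with ha
  have ha0 : (0:ℝ) < a := by positivity
  set A : ℝ := a * Real.exp (a^2/2) with hA
  have hA0 : 0 ≤ A := by positivity
  set B : ℝ := 1 + 2^k * (Nat.factorial k) with hB
  have hB0 : (0:ℝ) ≤ B := by positivity
  set w : ℝ → ℝ := fun t => Real.exp (t^2/2) * M / (1+t)^(k+1) with hw
  have hw0 : ∀ t : ℝ, 0 ≤ t → 0 ≤ w t := fun t ht => by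
    have : (0:ℝ) < (1+t)^(k+1) := by positivity
    positivity
  have hwcont : ContinuousOn w (Set.Ici 0) := by
    apply ContinuousOn.div
    · exact ((Real.continuous_exp.comp (by continuity)).mul continuous_const).continuousOn
    · exact (continuous_const.add continuous_id).pow (k+1) |>.continuousOn
    · intro t ht
      have : (0:ℝ) < 1 + t := by simp at ht; linarith
      positivity
  have hw_int : ∀ b c : ℝ, 0 ≤ b → 0 ≤ c → IntervalIntegrable w MeasureTheory.volume b c := by
    intro b c hbb hcc
    apply (hwcont.mono ?_).intervalIntegrable
    intro t ht
    rcases le_total b c with h | h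
    · rw [Set.uIcc_of_le h] at ht; exact le_trans hbb ht.1
    · rw [Set.uIcc_of_ge h] at ht; exact le_trans hcc ht.1
  -- step 1: bound the norm of the integral by the integral of w
  have step1 : ‖∫ t in (0:ℝ)..x, v t‖ ≤ ∫ t in (0:ℝ)..x, w t := by
    refine le_trans (intervalIntegral.norm_integral_le_integral_norm hx) ?_
    apply intervalIntegral.integral_mono_on hx
      (hv.norm.intervalIntegrable _ _) (hw_int 0 x le_rfl hx)
    intro t ht
    exact hb t ht.1
  have hxk : (0:ℝ) ≤ x^k * Real.exp (-x^2/2) := by positivity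
  have hBbd : x^k * Real.exp (-x^2/2) ≤ B := by
    have := pow_mul_exp_neg_le k x
    rwa [_root_.abs_of_nonneg hx] at this
  -- bound of ∫_0^b w for b ≤ a, b ≥ 0
  have small : ∀ b : ℝ, 0 ≤ b → b ≤ a → (∫ t in (0:ℝ)..b, w t) ≤ M * A := by
    intro b hb0 hba
    have hbd : ∀ t ∈ Set.Icc (0:ℝ) b, w t ≤ M * Real.exp (a^2/2) := by
      intro t ht
      have ht0 : 0 ≤ t := ht.1
      have hta : t ≤ a := le_trans ht.2 hba
      have h1 : Real.exp (t^2/2) ≤ Real.exp (a^2/2) := by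
        apply Real.exp_le_exp.2
        nlinarith
      have h2 : (1:ℝ) ≤ (1+t)^(k+1) := one_le_pow₀ (by linarith)
      calc w t ≤ Real.exp (t^2/2) * M / 1 := by
            apply div_le_div_of_nonneg_left ?_ one_pos h2 |>.trans ?_
            · positivity
            · simp
        _ = M * Real.exp (t^2/2) := by ring
        _ ≤ M * Real.exp (a^2/2) := by
            exact mul_le_mul_of_nonneg_left h1 hM
    calc (∫ t in (0:ℝ)..b, w t) ≤ ∫ t in (0:ℝ)..b, M * Real.exp (a^2/2) := by
          apply intervalIntegral.integral_mono_on hb0 (hw_int 0 b le_rfl hb0)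
            (intervalIntegrable_const) hbd
      _ = b * (M * Real.exp (a^2/2)) := by simp [intervalIntegral.integral_const, smul_eq_mul]; ring
      _ ≤ a * (M * Real.exp (a^2/2)) := by
          apply mul_le_mul_of_nonneg_right hba (by positivity)
      _ = M * A := by rw [hA]; ring
  rcases le_total x a with hxa | hax
  · -- small x
    have h1 := small x hx hxa
    have h2 : ‖∫ t in (0:ℝ)..x, v t‖ ≤ M * A := le_trans step1 h1
    calc x^k * Real.exp (-x^2/2) * ‖∫ t in (0:ℝ)..x, v t‖ ≤ B * (M * A) := by
          apply mul_le_mul hBbd h2 (norm_nonneg _) hB0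
      _ = M * A * B := by ring
      _ ≤ M * A * B + M := by linarith
  · -- large x : use the comparison function φ
    set φ : ℝ → ℝ := fun t => M * (Real.exp (t^2/2) / (1+t)^k) with hφ
    set Dv : ℝ → ℝ := fun t => M * ((Real.exp (t^2/2) * t * (1+t)^k -
      Real.exp (t^2/2) * ((k:ℝ) * (1+t)^(k-1) * 1)) / ((1+t)^k)^2) with hDv
    have hφd : ∀ t ∈ Set.uIcc a x, HasDerivAt φ (Dv t) t := by
      intro t ht
      rw [Set.uIcc_of_le hax] at ht
      have ht0 : (0:ℝ) < 1 + t := by have := ht.1; rw [ha] at this; push_cast at this ⊢; linarith [Nat.cast_nonneg (α := ℝ) k]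
      have h0 : HasDerivAt (fun s : ℝ => s^2/2) t t := by
        simpa using (hasDerivAt_pow 2 t).div_const 2
      have hc : HasDerivAt (fun s : ℝ => Real.exp (s^2/2)) (Real.exp (t^2/2) * t) t :=
        (Real.hasDerivAt_exp _).comp t h0
      have hd : HasDerivAt (fun s : ℝ => (1+s)^k) ((k:ℝ) * (1+t)^(k-1) * 1) t :=
        ((hasDerivAt_id t).const_add 1).pow k
      have hne : ((1:ℝ)+t)^k ≠ 0 := by positivity
      exact (hc.div hd hne).const_mul M
    have hDvcont : ContinuousOn Dv (Set.Icc a x) := by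
      have hnum : Continuous (fun t : ℝ => Real.exp (t^2/2) * t * (1+t)^k -
          Real.exp (t^2/2) * ((k:ℝ) * (1+t)^(k-1) * 1)) := by fun_prop
      have hden : Continuous (fun t : ℝ => ((1+t)^k)^2) := by fun_prop
      apply ContinuousOn.mul continuousOn_const
      apply ContinuousOn.div hnum.continuousOn hden.continuousOn
      intro t ht
      have : (0:ℝ) < 1 + t := by
        have := ht.1; rw [ha] at this; push_cast at this; linarith [Nat.cast_nonneg (α := ℝ) k]
      positivity
    have hDv_int : IntervalIntegrable Dv MeasureTheory.volume a x := by
      apply (hDvcont.mono ?_).intervalIntegrable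
      rw [Set.uIcc_of_le hax]
    have hcmp : ∀ t ∈ Set.Icc a x, w t ≤ Dv t := by
      intro t ht
      have hta : a ≤ t := ht.1
      have htk : (k:ℝ) + 1 ≤ t := by rw [ha] at hta; exact hta
      have ht0 : (0:ℝ) < 1 + t := by linarith [Nat.cast_nonneg (α := ℝ) k]
      have hE : (0:ℝ) < Real.exp (t^2/2) := Real.exp_pos _
      have hp1 : (1:ℝ) ≤ (1+t)^k := one_le_pow₀ (by linarith)
      have hq : (1+t)^(k-1) ≤ (1+t)^k := pow_le_pow_right₀ (by linarith) (Nat.sub_le k 1)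
      have hqk : (k:ℝ) * (1+t)^(k-1) ≤ (k:ℝ) * (1+t)^k :=
        mul_le_mul_of_nonneg_left hq (Nat.cast_nonneg k)
      have hD1 : (0:ℝ) < (1+t)^(k+1) := by positivity
      have hD2 : (0:ℝ) < ((1+t)^k)^2 := by positivity
      show Real.exp (t^2/2) * M / (1+t)^(k+1) ≤ M * ((Real.exp (t^2/2) * t * (1+t)^k -
        Real.exp (t^2/2) * ((k:ℝ) * (1+t)^(k-1) * 1)) / ((1+t)^k)^2)
      rw [mul_div_assoc' M _ _, div_le_div_iff₀ hD1 hD2]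
      have hpow : (1+t)^(k+1) = (1+t)^k * (1+t) := pow_succ _ _
      rw [hpow]
      set p := (1+t)^k with hp
      set q := (1+t)^(k-1) with hqdef
      have hp0 : (0:ℝ) ≤ p := le_trans zero_le_one hp1
      have hkt_p : ((k:ℝ)+1) * p ≤ t * p := mul_le_mul_of_nonneg_right htk hp0
      have h1 : p ≤ t * p - (k:ℝ)*q := by nlinarith [hkt_p, hqk]
      have key : p * 1 ≤ (t * p - (k:ℝ)*q) * (1+t) :=
        mul_le_mul h1 (by linarith) zero_le_one (by linarith)
      have h2 : p * 1 * p ≤ ((t * p - (k:ℝ)*q) * (1+t)) * p :=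
        mul_le_mul_of_nonneg_right key hp0
      have h3 := mul_le_mul_of_nonneg_left h2 (mul_nonneg hM hE.le)
      have h4 : Real.exp (t^2/2) * M * p^2 = M * Real.exp (t^2/2) * (p * 1 * p) := by ring
      have h5 : M * Real.exp (t^2/2) * (((t * p - (k:ℝ)*q) * (1+t)) * p)
          = M * (Real.exp (t^2/2) * t * p - Real.exp (t^2/2) * ((k:ℝ) * q * 1)) * (p*(1+t)) := by
        ring
      rw [h4, ← h5]
      exact h3
    have hsplit : (∫ t in (0:ℝ)..x, w t) = (∫ t in (0:ℝ)..a, w t) + ∫ t in a..x, w t :=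
      (intervalIntegral.integral_add_adjacent_intervals (hw_int 0 a le_rfl ha0.le)
        (hw_int a x ha0.le hx)).symm
    have hftc : (∫ t in a..x, Dv t) = φ x - φ a :=
      intervalIntegral.integral_eq_sub_of_hasDerivAt hφd hDv_int
    have hcmp2 : (∫ t in a..x, w t) ≤ φ x - φ a := by
      rw [← hftc]
      exact intervalIntegral.integral_mono_on hax (hw_int a x ha0.le hx) hDv_int hcmp
    have hφa : 0 ≤ φ a := by
      have : (0:ℝ) < 1 + a := by linarith
      positivity
    have hInt : (∫ t in (0:ℝ)..x, w t) ≤ M * A + φ x := by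
      have := small a ha0.le le_rfl
      rw [hsplit]
      linarith
    have hexpinv : Real.exp (-x^2/2) * Real.exp (x^2/2) = 1 := by
      rw [← Real.exp_add]; ring_nf; exact Real.exp_zero
    have h1x : (0:ℝ) < (1+x)^k := by positivity
    have hterm2 : x^k * Real.exp (-x^2/2) * φ x ≤ M := by
      have heq : x^k * Real.exp (-x^2/2) * φ x
          = M * (x^k/(1+x)^k) * (Real.exp (-x^2/2) * Real.exp (x^2/2)) := by
        rw [hφ]
        have hne : ((1:ℝ)+x)^k ≠ 0 := ne_of_gt h1x
        field_simp
      rw [heq, hexpinv, mul_one]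
      have hxpow : x^k ≤ (1+x)^k := pow_le_pow_left₀ hx (by linarith) k
      calc M * (x^k/(1+x)^k) ≤ M * 1 :=
            mul_le_mul_of_nonneg_left ((div_le_one h1x).2 hxpow) hM
        _ = M := mul_one M
    calc x^k * Real.exp (-x^2/2) * ‖∫ t in (0:ℝ)..x, v t‖
        ≤ x^k * Real.exp (-x^2/2) * (M * A + φ x) :=
          mul_le_mul_of_nonneg_left (le_trans step1 hInt) hxk
      _ = x^k * Real.exp (-x^2/2) * (M * A) + x^k * Real.exp (-x^2/2) * φ x := by ring
      _ ≤ B * (M * A) + M := add_le_add (mul_le_mul_of_nonneg_right hBbd (by positivity)) hterm2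
      _ = M * A * B + M := by ring

lemma norm_exp_neg_sq (x : ℝ) : ‖Complex.exp (-(x:ℂ)^2/2)‖ = Real.exp (-x^2/2) := by
  have h : (-(x:ℂ)^2/2) = ((-x^2/2 : ℝ) : ℂ) := by push_cast; ring
  rw [h, Complex.norm_exp_ofReal]

lemma norm_exp_sq (x : ℝ) : ‖Complex.exp ((x:ℂ)^2/2)‖ = Real.exp (x^2/2) := by
  have h : ((x:ℂ)^2/2) = ((x^2/2 : ℝ) : ℂ) := by push_cast; ring
  rw [h, Complex.norm_exp_ofReal]

lemma g_bound (k : ℕ) : ∃ M : ℝ, 0 ≤ M ∧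
    ∀ t : ℝ, ‖g t‖ ≤ M / (1+|t|)^(k+1) := by
  set M : ℝ := 2^(k+1) * (Finset.Iic ((k+1 : ℕ), (0 : ℕ))).sup
    (fun m => SchwartzMap.seminorm ℝ m.1 m.2) g with hMdef
  have key : ∀ t : ℝ, (1+|t|)^(k+1) * ‖g t‖ ≤ M := by
    intro t
    have h := one_add_le_sup_seminorm_apply (𝕜 := ℝ) (m := ((k+1 : ℕ), (0:ℕ)))
      (k := k+1) (n := 0) le_rfl le_rfl g t
    rw [norm_iteratedFDeriv_zero] at h
    simpa [Real.norm_eq_abs] using h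
  have hM0 : 0 ≤ M := le_trans (by positivity) (key 0)
  refine ⟨M, hM0, fun t => ?_⟩
  have hpos : (0:ℝ) < (1+|t|)^(k+1) := by positivity
  rw [le_div_iff₀ hpos]
  calc ‖g t‖ * (1+|t|)^(k+1) = (1+|t|)^(k+1) * ‖g t‖ := by ring
    _ ≤ M := key t

lemma F_decay0 (k : ℕ) : ∃ C : ℝ, ∀ x : ℝ, |x|^k * ‖F g x‖ ≤ C := by
  obtain ⟨M, hM0, hM⟩ := g_bound g k
  refine ⟨M * (((k:ℝ)+1) * Real.exp (((k:ℝ)+1)^2/2)) * (1 + 2^k * (Nat.factorial k)) + M,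
    fun x => ?_⟩
  have hnorm : ‖F g x‖ = Real.exp (-x^2/2) * ‖∫ t in (0:ℝ)..x, u g t‖ := by
    rw [F, norm_mul, norm_exp_neg_sq]
  have hub : ∀ t : ℝ, ‖u g t‖ = Real.exp (t^2/2) * ‖g t‖ := by
    intro t; rw [u, norm_mul, norm_exp_sq]
  rcases le_total 0 x with hx | hx
  · have hb : ∀ t : ℝ, 0 ≤ t → ‖u g t‖ ≤ Real.exp (t^2/2) * M / (1+t)^(k+1) := by
      intro t ht
      rw [hub t, mul_div_assoc]
      apply mul_le_mul_of_nonneg_left _ (Real.exp_pos _).le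
      have := hM t
      rwa [_root_.abs_of_nonneg ht] at this
    have := core k M hM0 (u g) (continuous_u g) hb x hx
    rw [hnorm, _root_.abs_of_nonneg hx, ← mul_assoc]
    linarith
  · -- x ≤ 0 : reflect
    set y := -x with hy
    have hy0 : 0 ≤ y := by simp [hy]; linarith
    have hrefl : ‖∫ t in (0:ℝ)..x, u g t‖ = ‖∫ t in (0:ℝ)..y, u g (-t)‖ := by
      have h := intervalIntegral.integral_comp_neg (a := (0:ℝ)) (b := y) (f := u g)
      rw [hy] at h ⊢
      rw [h, neg_neg, neg_zero, intervalIntegral.integral_symm, norm_neg]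
    have hb : ∀ t : ℝ, 0 ≤ t → ‖u g (-t)‖ ≤ Real.exp (t^2/2) * M / (1+t)^(k+1) := by
      intro t ht
      rw [hub (-t)]
      have heq : Real.exp ((-t : ℝ)^2/2) = Real.exp (t^2/2) := by ring_nf
      rw [heq, mul_div_assoc]
      apply mul_le_mul_of_nonneg_left _ (Real.exp_pos _).le
      have := hM (-t)
      rwa [abs_neg, _root_.abs_of_nonneg ht] at this
    have := core k M hM0 (fun t => u g (-t)) ((continuous_u g).comp continuous_neg) hb y hy0
    have habs : |x| = y := by rw [hy, abs_of_nonpos hx]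
    have hsq : Real.exp (-x^2/2) = Real.exp (-y^2/2) := by rw [hy]; ring_nf
    rw [hnorm, habs, hsq, hrefl, ← mul_assoc]
    linarith

lemma g_deriv_decay (k n : ℕ) : ∃ C : ℝ, ∀ x : ℝ, |x|^k * ‖iteratedDeriv n (⇑g) x‖ ≤ C := by
  obtain ⟨C, hC⟩ := g.decay' k n
  refine ⟨C, fun x => ?_⟩
  have := hC x
  rwa [norm_iteratedFDeriv_eq_norm_iteratedDeriv, Real.norm_eq_abs] at this

lemma F_decay : ∀ n k : ℕ, ∃ C : ℝ, ∀ x : ℝ, |x|^k * ‖iteratedDeriv n (F g) x‖ ≤ C := by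
  intro n
  induction n using Nat.strong_induction_on with
  | _ n ih =>
    match n with
    | 0 =>
      intro k
      simpa [iteratedDeriv_zero] using F_decay0 g k
    | (m+1) =>
      intro k
      obtain ⟨C1, hC1⟩ : ∃ C : ℝ, ∀ x : ℝ, |x|^(k+1) * ‖iteratedDeriv m (F g) x‖ ≤ C :=
        ih m (by omega) (k+1)
      obtain ⟨C2, hC2⟩ : ∃ C : ℝ, ∀ x : ℝ, |x|^k * ‖iteratedDeriv (m-1) (F g) x‖ ≤ C :=
        ih (m-1) (by omega) k
      obtain ⟨C3, hC3⟩ := g_deriv_decay g k m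
      refine ⟨C1 + (m:ℝ) * C2 + C3, fun x => ?_⟩
      rw [iteratedDeriv_F_succ g m x]
      have hk0 : (0:ℝ) ≤ |x|^k := by positivity
      calc |x|^k * ‖-(x:ℂ) * iteratedDeriv m (F g) x - (m:ℂ) * iteratedDeriv (m-1) (F g) x
            + iteratedDeriv m (⇑g) x‖
          ≤ |x|^k * (‖(x:ℂ)‖ * ‖iteratedDeriv m (F g) x‖
              + (m:ℝ) * ‖iteratedDeriv (m-1) (F g) x‖ + ‖iteratedDeriv m (⇑g) x‖) := by
            apply mul_le_mul_of_nonneg_left _ hk0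
            refine le_trans (norm_add_le _ _) ?_
            have h1 := norm_sub_le (-(x:ℂ) * iteratedDeriv m (F g) x)
              ((m:ℂ) * iteratedDeriv (m-1) (F g) x)
            have h2 : ‖-(x:ℂ) * iteratedDeriv m (F g) x‖ = ‖(x:ℂ)‖ * ‖iteratedDeriv m (F g) x‖ := by
              rw [norm_mul, norm_neg]
            have h3 : ‖(m:ℂ) * iteratedDeriv (m-1) (F g) x‖
                = (m:ℝ) * ‖iteratedDeriv (m-1) (F g) x‖ := by
              rw [norm_mul]
              norm_num
            rw [h2, h3] at h1
            linarith
        _ = |x|^(k+1) * ‖iteratedDeriv m (F g) x‖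
            + (m:ℝ) * (|x|^k * ‖iteratedDeriv (m-1) (F g) x‖)
            + |x|^k * ‖iteratedDeriv m (⇑g) x‖ := by
            rw [Complex.norm_real, Real.norm_eq_abs, pow_succ]
            ring
        _ ≤ C1 + (m:ℝ) * C2 + C3 := by
            have h4 := mul_le_mul_of_nonneg_left (hC2 x) (Nat.cast_nonneg (α := ℝ) m)
            have h5 := hC1 x
            have h6 := hC3 x
            linarith

/-- The Schwartz function solving the ODE. -/
def Fs (g : SchwartzMap ℝ ℂ) : SchwartzMap ℝ ℂ where
  toFun := F g
  smooth' := contDiff_infty_F g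
  decay' := by
    intro k n
    obtain ⟨C, hC⟩ := F_decay g n k
    refine ⟨C, fun x => ?_⟩
    rw [norm_iteratedFDeriv_eq_norm_iteratedDeriv, Real.norm_eq_abs]
    exact hC x

lemma Fs_solves (x : ℝ) :
    deriv (fun y : ℝ => Fs g y) x + (x : ℂ) * Fs g x = g x := by
  have hco : ⇑(Fs g) = F g := rfl
  rw [hco, (hasDerivAt_F g x).deriv]
  ring

lemma kernel_forward (f : SchwartzMap ℝ ℂ)
    (h : ∀ x : ℝ, deriv (fun y : ℝ => f y) x + (x : ℂ) * f x = 0) :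
    ∀ x : ℝ, f x = f 0 * Complex.exp (-(x:ℂ)^2/2) := by
  set H : ℝ → ℂ := fun x => f x * Complex.exp ((x:ℂ)^2/2) with hH
  have hfd : ∀ x : ℝ, HasDerivAt (fun y : ℝ => f y) (deriv (fun y : ℝ => f y) x) x := by
    intro x
    exact (((f.smooth 1).differentiable (by simp)) x).hasDerivAt
  have hHd : ∀ x : ℝ, HasDerivAt H 0 x := by
    intro x
    have h1 := (hfd x).mul (hasDerivAt_expSq x)
    have h2 : deriv (fun y : ℝ => f y) x * Complex.exp ((x:ℂ)^2/2)
        + f x * ((x:ℂ) * Complex.exp ((x:ℂ)^2/2))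
        = (deriv (fun y : ℝ => f y) x + (x:ℂ) * f x) * Complex.exp ((x:ℂ)^2/2) := by ring
    rw [h2, h x, zero_mul] at h1
    exact h1
  have hconst : ∀ x : ℝ, H x = H 0 := by
    intro x
    exact is_const_of_deriv_eq_zero (fun y => (hHd y).differentiableAt)
      (fun y => (hHd y).deriv) x 0
  intro x
  have h0 : H 0 = f 0 := by simp [hH]
  have hx := hconst x
  rw [h0, hH] at hx
  calc f x = f x * (Complex.exp ((x:ℂ)^2/2) * Complex.exp (-(x:ℂ)^2/2)) := by
        rw [mul_comm (Complex.exp _), exp_mul_exp_neg, mul_one]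
    _ = (f x * Complex.exp ((x:ℂ)^2/2)) * Complex.exp (-(x:ℂ)^2/2) := by ring
    _ = f 0 * Complex.exp (-(x:ℂ)^2/2) := by
        rw [show f x * Complex.exp ((x:ℂ)^2/2) = f 0 from hx]

lemma kernel_backward (f : SchwartzMap ℝ ℂ) (c : ℂ)
    (h : ∀ x : ℝ, f x = c * Complex.exp (-(x:ℂ)^2/2)) :
    ∀ x : ℝ, deriv (fun y : ℝ => f y) x + (x : ℂ) * f x = 0 := by
  intro x
  have hfun : (fun y : ℝ => f y) = fun y : ℝ => c * Complex.exp (-(y:ℂ)^2/2) :=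
    funext h
  have hd := (hasDerivAt_expNegSq x).const_mul c
  rw [hfun, hd.deriv, h x]
  ring

end AnnAux

end AnnAux

theorem annihilation_operator_surjective_kernel_gaussian :
    (∀ g : SchwartzMap ℝ ℂ, ∃ f : SchwartzMap ℝ ℂ,
        ∀ x : ℝ, deriv (fun y : ℝ => f y) x + (x : ℂ) * f x = g x) ∧
    (∀ f : SchwartzMap ℝ ℂ,
        (∀ x : ℝ, deriv (fun y : ℝ => f y) x + (x : ℂ) * f x = 0) ↔
          ∃ c : ℂ, ∀ x : ℝ, f x = c * Complex.exp (-(x ^ 2) / 2)) := by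
  constructor
  · intro g
    exact ⟨AnnAux.Fs g, AnnAux.Fs_solves g⟩
  · intro f
    constructor
    · intro h
      refine ⟨f 0, fun x => ?_⟩
      have := AnnAux.kernel_forward f h x
      exact this
    · rintro ⟨c, hc⟩
      apply AnnAux.kernel_backward f c
      intro x
      exact hc x
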